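/- Minimal valuation soundness for a single boxed-atom antecedent: let F = (W,N) be a neighbourhood frame, w ∈ W, and ψ(p) a positive INL formula in the single variable p. Then Box_1(⊤; p) → ψ(p) is valid at w under all valuations iff for every S ∈ N(w), ψ holds at w under the valuation V_S with V_S(p) = S. -/
import Mathlib


/-- Formulas of instantial neighbourhood logic (INL). Propositional variables
are indexed by naturals; `box n φs φ` is the (n+1)-ary modality `Box_n(φ_1,…,φ_n; φ)`. -/
inductive Formula : Type where
  | var : ℕ → Formula
  | bot : Formula
  | top : Formula
  | neg : Formula → Formula
  | and : Formula → Formula → Formula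
  | or : Formula → Formula → Formula
  | box : (n : ℕ) → (Fin n → Formula) → Formula → Formula

def Formula.imp (φ ψ : Formula) : Formula := .or (.neg φ) ψ

/-- Satisfaction on a neighbourhood frame `(W, N)` under valuation `V`. -/
def Sat {W : Type} (N : W → Set (Set W)) (V : ℕ → Set W) : Formula → W → Prop
  | .var p, w => w ∈ V p
  | .bot, _ => False
  | .top, _ => True
  | .neg φ, w => ¬ Sat N V φ w
  | .and φ ψ, w => Sat N V φ w ∧ Sat N V ψ w
  | .or φ ψ, w => Sat N V φ w ∨ Sat N V ψ w
  | .box _ φs φ, w =>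
      ∃ S ∈ N w, (∀ s ∈ S, Sat N V φ s) ∧ ∀ i, ∃ s ∈ S, Sat N V (φs i) s

mutual
  /-- Every occurrence of every propositional variable is under an even number of
  negations. -/
  inductive Positive : Formula → Prop where
    | var (p : ℕ) : Positive (.var p)
    | bot : Positive .bot
    | top : Positive .top
    | neg {φ} : Negative φ → Positive (.neg φ)
    | and {φ ψ} : Positive φ → Positive ψ → Positive (.and φ ψ)
    | or {φ ψ} : Positive φ → Positive ψ → Positive (.or φ ψ)
    | box {n φs φ} : (∀ i, Positive (φs i)) → Positive φ → Positive (.box n φs φ)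
  /-- Every occurrence of every propositional variable is under an odd number of
  negations. -/
  inductive Negative : Formula → Prop where
    | bot : Negative .bot
    | top : Negative .top
    | neg {φ} : Positive φ → Negative (.neg φ)
    | and {φ ψ} : Negative φ → Negative ψ → Negative (.and φ ψ)
    | or {φ ψ} : Negative φ → Negative ψ → Negative (.or φ ψ)
    | box {n φs φ} : (∀ i, Negative (φs i)) → Negative φ → Negative (.box n φs φ)
end

/-- The set of propositional variables occurring in a formula. -/
def FVars : Formula → Set ℕ
  | .var p => {p}
  | .bot => ∅
  | .top => ∅
  | .neg φ => FVars φ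
  | .and φ ψ => FVars φ ∪ FVars ψ
  | .or φ ψ => FVars φ ∪ FVars ψ
  | .box _ φs φ => (⋃ i, FVars (φs i)) ∪ FVars φ

lemma mono {W : Type} (N : W → Set (Set W)) (V V' : ℕ → Set W) :
    ∀ φ : Formula,
      ((Positive φ → (∀ p ∈ FVars φ, V p ⊆ V' p) →
        ∀ w, Sat N V φ w → Sat N V' φ w) ∧
       (Negative φ → (∀ p ∈ FVars φ, V p ⊆ V' p) →
        ∀ w, Sat N V' φ w → Sat N V φ w)) := by
  intro φ
  induction φ with
  | var p =>
    constructor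
    · intro _ h w hw; exact h p (by simp [FVars]) hw
    · intro hneg; cases hneg
  | bot => exact ⟨fun _ _ w h => h, fun _ _ w h => h⟩
  | top => exact ⟨fun _ _ w h => h, fun _ _ w h => h⟩
  | neg φ ih =>
    constructor
    · intro hpos h w hw
      cases hpos with
      | neg hn => exact fun hc => hw (ih.2 hn h w hc)
    · intro hneg h w hw
      cases hneg with
      | neg hp => exact fun hc => hw (ih.1 hp h w hc)
  | and φ ψ ihφ ihψ =>
    constructor
    · intro hpos h w hw
      cases hpos with
      | and h1 h2 =>
        exact ⟨ihφ.1 h1 (fun p hp => h p (Or.inl hp)) w hw.1,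
               ihψ.1 h2 (fun p hp => h p (Or.inr hp)) w hw.2⟩
    · intro hneg h w hw
      cases hneg with
      | and h1 h2 =>
        exact ⟨ihφ.2 h1 (fun p hp => h p (Or.inl hp)) w hw.1,
               ihψ.2 h2 (fun p hp => h p (Or.inr hp)) w hw.2⟩
  | or φ ψ ihφ ihψ =>
    constructor
    · intro hpos h w hw
      cases hpos with
      | or h1 h2 =>
        exact hw.imp (ihφ.1 h1 (fun p hp => h p (Or.inl hp)) w)
                     (ihψ.1 h2 (fun p hp => h p (Or.inr hp)) w)
    · intro hneg h w hw
      cases hneg with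
      | or h1 h2 =>
        exact hw.imp (ihφ.2 h1 (fun p hp => h p (Or.inl hp)) w)
                     (ihψ.2 h2 (fun p hp => h p (Or.inr hp)) w)
  | box n φs φ ihs ihφ =>
    constructor
    · intro hpos h w hw
      cases hpos with
      | box h1 h2 =>
        obtain ⟨S, hS, hall, hinst⟩ := hw
        refine ⟨S, hS, fun s hs => ihφ.1 h2 (fun p hp => h p (Or.inr hp)) s (hall s hs),
          fun i => ?_⟩
        obtain ⟨s, hs, hsat⟩ := hinst i
        exact ⟨s, hs, (ihs i).1 (h1 i)
          (fun p hp => h p (Or.inl (Set.mem_iUnion.2 ⟨i, hp⟩))) s hsat⟩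
    · intro hneg h w hw
      cases hneg with
      | box h1 h2 =>
        obtain ⟨S, hS, hall, hinst⟩ := hw
        refine ⟨S, hS, fun s hs => ihφ.2 h2 (fun p hp => h p (Or.inr hp)) s (hall s hs),
          fun i => ?_⟩
        obtain ⟨s, hs, hsat⟩ := hinst i
        exact ⟨s, hs, (ihs i).2 (h1 i)
          (fun p hp => h p (Or.inl (Set.mem_iUnion.2 ⟨i, hp⟩))) s hsat⟩

/-- minimal valuation soundness for a single boxed-atom antecedent.
Let `ψ` be a positive INL formula in the single variable `p := var 0`. Then
`Box_1(⊤; p) → ψ` is valid at `w` under all valuations iff for every nonempty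
`S ∈ N(w)`, `ψ` holds at `w` under the minimal valuation `V_S` with `V_S(p) = S`. -/
theorem stmt_18 {W : Type} (N : W → Set (Set W)) (w : W) (ψ : Formula)
    (hpos : Positive ψ) (hvars : FVars ψ ⊆ {0}) :
    (∀ V : ℕ → Set W,
        Sat N V (Formula.imp (.box 1 ![Formula.top] (.var 0)) ψ) w) ↔
      ∀ S ∈ N w, S.Nonempty → Sat N (fun _ => S) ψ w := by
  constructor
  · intro h S hS ⟨x, hx⟩
    have := h (fun _ => S)
    rcases this with hn | hψ
    · exact absurd ⟨S, hS, fun s hs => hs, fun i => ⟨x, hx, by fin_cases i; trivial⟩⟩ hn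
    · exact hψ
  · intro h V
    by_cases hb : Sat N V (.box 1 ![Formula.top] (.var 0)) w
    · right
      obtain ⟨S, hS, hall, hinst⟩ := hb
      obtain ⟨s, hs, _⟩ := hinst 0
      have hψS := h S hS ⟨s, hs⟩
      refine (mono N (fun _ => S) V ψ).1 hpos ?_ w hψS
      intro p hp
      have : p = 0 := hvars hp
      subst this
      exact fun x hx => hall x hx
    · left; exact hb
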